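/- Let γ ∈ (0, 1/L). If z ∈ H satisfies z = prox_{γg}(z - γF(z̄)) where z̄ = prox_{γg}(z - γF(z)), then z = z̄ and z ∈ zer(F + ∂g). -/

import Mathlib

open scoped RealInnerProductSpace

/-- `g` is proper: finite somewhere and never `⊥`. -/
def IsProperEF {H : Type*} (g : H → EReal) : Prop :=
  (∃ x, g x ≠ ⊤) ∧ ∀ x, g x ≠ ⊥

/-- `g` is convex (extended-real-valued). -/
def IsConvexEF {H : Type*} [NormedAddCommGroup H] [InnerProductSpace ℝ H]
    (g : H → EReal) : Prop :=
  ∀ x y : H, ∀ a b : ℝ, 0 ≤ a → 0 ≤ b → a + b = 1 →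
    g (a • x + b • y) ≤ (a : EReal) * g x + (b : EReal) * g y

/-- `ξ` is a subgradient of `g` at `z`, i.e. `ξ ∈ ∂g(z)`. -/
def InSubdiff {H : Type*} [NormedAddCommGroup H] [InnerProductSpace ℝ H]
    (g : H → EReal) (z ξ : H) : Prop :=
  ∀ y : H, g z + ((⟪ξ, y - z⟫ : ℝ) : EReal) ≤ g y

/-- `p = prox_{γ g}(x)`, i.e. `p` minimizes `g(·) + (1/(2γ))‖x - ·‖²`. -/
def IsProx {H : Type*} [NormedAddCommGroup H] [InnerProductSpace ℝ H]
    (g : H → EReal) (γ : ℝ) (x p : H) : Prop :=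
  ∀ y : H, g p + ((1 / (2 * γ) * ‖x - p‖ ^ 2 : ℝ) : EReal) ≤
    g y + ((1 / (2 * γ) * ‖x - y‖ ^ 2 : ℝ) : EReal)

/-- The Lyapunov function `V`. -/
noncomputable def lyapV {H : Type*} [NormedAddCommGroup H] [InnerProductSpace ℝ H]
    (F : H → H) (γ : ℝ) (z zb zp : H) : ℝ :=
  (2 / γ) * ⟪z - zp, F z - F zb⟫ + (1 / γ ^ 2) * ‖zp - zb‖ ^ 2 + (1 / γ ^ 2) * ‖z - zp‖ ^ 2

lemma prox_finite {H : Type*} [NormedAddCommGroup H] [InnerProductSpace ℝ H]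
    (g : H → EReal) (hproper : IsProperEF g) {γ : ℝ} {x p : H}
    (hp : IsProx g γ x p) : ∃ a : ℝ, g p = (a : EReal) := by
  obtain ⟨⟨y0, hy0⟩, hbot⟩ := hproper
  have hne : g p ≠ ⊤ := by
    intro htop
    have h := hp y0
    rw [htop, EReal.top_add_coe] at h
    exact absurd h (not_le.mpr (EReal.add_lt_top hy0 (EReal.coe_ne_top _)))
  exact ⟨(g p).toReal, (EReal.coe_toReal hne (hbot p)).symm⟩

lemma prox_subgrad {H : Type*} [NormedAddCommGroup H] [InnerProductSpace ℝ H]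
    (g : H → EReal) (hproper : IsProperEF g) (hconv : IsConvexEF g)
    {γ : ℝ} (hγ0 : 0 < γ) {x p : H}
    (hp : IsProx g γ x p) : InSubdiff g p (γ⁻¹ • (x - p)) := by
  obtain ⟨a, ha⟩ := prox_finite g hproper hp
  intro y
  by_cases hy : g y = ⊤
  · rw [hy]; exact le_top
  obtain ⟨b, hb⟩ : ∃ b : ℝ, g y = (b : EReal) :=
    ⟨(g y).toReal, (EReal.coe_toReal hy (hproper.2 y)).symm⟩
  rw [ha, hb, ← EReal.coe_add, EReal.coe_le_coe_iff]
  rw [real_inner_smul_left]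
  set c : ℝ := 1 / (2 * γ) with hc
  have hcpos : 0 < c := by positivity
  set ip : ℝ := ⟪x - p, y - p⟫ with hip
  set K : ℝ := ‖y - p‖ ^ 2 with hK
  have hKnn : 0 ≤ K := by positivity
  -- key inequality for each t ∈ (0,1]
  have key : ∀ t : ℝ, 0 < t → t ≤ 1 → a + 2 * c * ip ≤ b + c * t * K := by
    intro t ht ht1
    have hcomb := hconv p y (1 - t) t (by linarith) ht.le (by ring)
    have hpt := hp ((1 - t) • p + t • y)
    have hnorm : ‖x - ((1 - t) • p + t • y)‖ ^ 2
        = ‖x - p‖ ^ 2 - 2 * (t * ip) + t ^ 2 * K := by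
      have : x - ((1 - t) • p + t • y) = (x - p) - t • (y - p) := by
        module
      rw [this, norm_sub_sq_real, real_inner_smul_right, norm_smul]
      simp only [Real.norm_eq_abs, mul_pow, sq_abs, hK, hip]
      try ring
    have hchain : ((a + c * ‖x - p‖ ^ 2 : ℝ) : EReal)
        ≤ (((1 - t) * a + t * b + c * ‖x - ((1 - t) • p + t • y)‖ ^ 2 : ℝ) : EReal) := by
      calc ((a + c * ‖x - p‖ ^ 2 : ℝ) : EReal)
          = g p + ((c * ‖x - p‖ ^ 2 : ℝ) : EReal) := by rw [ha, ← EReal.coe_add]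
        _ ≤ g ((1 - t) • p + t • y) + ((c * ‖x - ((1 - t) • p + t • y)‖ ^ 2 : ℝ) : EReal) :=
            hp _
        _ ≤ (((1 - t) * a + t * b : ℝ) : EReal)
              + ((c * ‖x - ((1 - t) • p + t • y)‖ ^ 2 : ℝ) : EReal) := by
            refine add_le_add ?_ le_rfl
            calc g ((1 - t) • p + t • y)
                ≤ ((1 - t : ℝ) : EReal) * g p + ((t : ℝ) : EReal) * g y := hcomb
              _ = (((1 - t) * a + t * b : ℝ) : EReal) := by
                  rw [ha, hb, ← EReal.coe_mul, ← EReal.coe_mul, ← EReal.coe_add]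
        _ = _ := by rw [← EReal.coe_add]
    have hreal : a + c * ‖x - p‖ ^ 2
        ≤ (1 - t) * a + t * b + c * ‖x - ((1 - t) • p + t • y)‖ ^ 2 :=
      EReal.coe_le_coe_iff.mp hchain
    rw [hnorm] at hreal
    have h2 : t * (a + 2 * c * ip) ≤ t * (b + c * t * K) := by nlinarith [hreal]
    exact le_of_mul_le_mul_left h2 ht
  have h2c : 2 * c = γ⁻¹ := by
    field_simp [hc]
    rw [hc]; field_simp [hγ0.ne']
  rw [← h2c]
  refine le_of_forall_pos_le_add fun ε hε => ?_
  rcases le_or_gt (c * K) 0 with hck | hck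
  · have := key 1 one_pos le_rfl
    nlinarith
  · set t : ℝ := min 1 (ε / (c * K)) with htdef
    have htpos : 0 < t := lt_min one_pos (div_pos hε hck)
    have := key t htpos (min_le_left _ _)
    have htle : c * t * K ≤ ε := by
      have : t ≤ ε / (c * K) := min_le_right _ _
      calc c * t * K = t * (c * K) := by ring
        _ ≤ (ε / (c * K)) * (c * K) := by nlinarith
        _ = ε := div_mul_cancel₀ _ (ne_of_gt hck)
    linarith

theorem stmt11 {H : Type*} [NormedAddCommGroup H] [InnerProductSpace ℝ H] [CompleteSpace H]
    (F : H → H) (L γ : ℝ) (hL : 0 < L)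
    (hmono : ∀ x y : H, 0 ≤ ⟪F x - F y, x - y⟫)
    (hlip : ∀ x y : H, ‖F x - F y‖ ≤ L * ‖x - y‖)
    (g : H → EReal) (hproper : IsProperEF g) (hconv : IsConvexEF g)
    (hlsc : LowerSemicontinuous g)
    (hγ0 : 0 < γ) (hγ1 : γ < 1 / L)
    (z zb : H) (hzb : IsProx g γ (z - γ • F z) zb)
    (hfix : IsProx g γ (z - γ • F zb) z) :
    z = zb ∧ InSubdiff g z (-F z) := by
  have hγne : γ ≠ 0 := ne_of_gt hγ0
  have hs1 : InSubdiff g zb (γ⁻¹ • (z - γ • F z - zb)) :=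
    prox_subgrad g hproper hconv hγ0 hzb
  have hs2' : InSubdiff g z (γ⁻¹ • (z - γ • F zb - z)) :=
    prox_subgrad g hproper hconv hγ0 hfix
  have hsimp : γ⁻¹ • (z - γ • F zb - z) = -F zb := by
    rw [show z - γ • F zb - z = -(γ • F zb) by abel, smul_neg, smul_smul,
      inv_mul_cancel₀ hγne, one_smul]
  rw [hsimp] at hs2'
  -- finiteness
  obtain ⟨A, hA⟩ := prox_finite g hproper hzb
  obtain ⟨B, hB⟩ := prox_finite g hproper hfix
  -- real versions of the two subgradient inequalities
  have h1 : A + ⟪γ⁻¹ • (z - γ • F z - zb), z - zb⟫ ≤ B := by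
    have := hs1 z
    rw [hA, hB, ← EReal.coe_add, EReal.coe_le_coe_iff] at this
    exact this
  have h2 : B + ⟪-F zb, zb - z⟫ ≤ A := by
    have := hs2' zb
    rw [hA, hB, ← EReal.coe_add, EReal.coe_le_coe_iff] at this
    exact this
  have hin1 : ⟪γ⁻¹ • (z - γ • F z - zb), z - zb⟫
      = γ⁻¹ * ‖z - zb‖ ^ 2 - ⟪F z, z - zb⟫ := by
    rw [real_inner_smul_left, show z - γ • F z - zb = (z - zb) - γ • F z by abel,
      inner_sub_left, real_inner_smul_left, real_inner_self_eq_norm_sq]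
    field_simp
  have hin2 : ⟪-F zb, zb - z⟫ = ⟪F zb, z - zb⟫ := by
    rw [inner_neg_left, ← inner_neg_right]
    congr 1
    abel
  have hcs : ⟪F z - F zb, z - zb⟫ ≤ L * ‖z - zb‖ ^ 2 := by
    calc ⟪F z - F zb, z - zb⟫ ≤ ‖F z - F zb‖ * ‖z - zb‖ := real_inner_le_norm _ _
      _ ≤ (L * ‖z - zb‖) * ‖z - zb‖ := by
          have := hlip z zb
          nlinarith [norm_nonneg (z - zb)]
      _ = L * ‖z - zb‖ ^ 2 := by ring
  have hγL : γ * L < 1 := (lt_div_iff₀ hL).mp hγ1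
  have hLγ : L < γ⁻¹ := by
    rw [inv_eq_one_div, lt_div_iff₀ hγ0]
    nlinarith
  have hsum : γ⁻¹ * ‖z - zb‖ ^ 2 ≤ ⟪F z - F zb, z - zb⟫ := by
    rw [inner_sub_left]
    rw [hin1] at h1
    rw [hin2] at h2
    linarith
  have hzero : ‖z - zb‖ ^ 2 = 0 := by nlinarith [sq_nonneg ‖z - zb‖]
  have hzzb : z = zb := by
    have h0 : z - zb = 0 := by
      rwa [pow_eq_zero_iff (two_ne_zero), norm_eq_zero] at hzero
    exact sub_eq_zero.mp h0
  refine ⟨hzzb, ?_⟩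
  rw [hzzb] at hs2' ⊢
  exact hs2'
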